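/- Let X be a finite nonempty set and T a row-stochastic transition matrix on X with minimal mixing rate γ := min_{i₁,i₂} ∑_j min{T(j | i₁), T(j | i₂)}. Then for any two probability distributions φ and ψ on X there exist nonnegative matrices T^Γ and T^Δ on X such that T = T^Γ + T^Δ entrywise, for every i the row sum ∑_j T^Γ(j | i) = γ, and for every j, ∑_i φ(i)·T^Γ(j | i) = ∑_i ψ(i)·T^Γ(j | i). -/
import Mathlib


/-- Let `T` be a row-stochastic transition matrix on a finite nonempty set `X`
with minimal mixing rate `γ = min_{i₁,i₂} ∑_j min{T(j|i₁), T(j|i₂)}`. Then for any two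
probability distributions `φ` and `ψ` on `X`, there exist nonnegative matrices `T^Γ` and `T^Δ`
with `T = T^Γ + T^Δ` entrywise, every row of `T^Γ` summing to `γ`, and
`∑_i φ(i)·T^Γ(j|i) = ∑_i ψ(i)·T^Γ(j|i)` for every `j`. -/
theorem contraction_decomposition_exists
    {X : Type*} [Fintype X] [Nonempty X]
    (T : X → X → ℝ) (hT0 : ∀ i j, 0 ≤ T i j) (hT1 : ∀ i, ∑ j, T i j = 1)
    (γ : ℝ)
    (hγ : γ = Finset.univ.inf' Finset.univ_nonempty
      (fun q : X × X => ∑ j, min (T q.1 j) (T q.2 j)))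
    (φ ψ : X → ℝ)
    (hφ0 : ∀ x, 0 ≤ φ x) (hφ1 : ∑ x, φ x = 1)
    (hψ0 : ∀ x, 0 ≤ ψ x) (hψ1 : ∑ x, ψ x = 1) :
    ∃ TΓ TΔ : X → X → ℝ,
      (∀ i j, 0 ≤ TΓ i j) ∧ (∀ i j, 0 ≤ TΔ i j) ∧
      (∀ i j, T i j = TΓ i j + TΔ i j) ∧
      (∀ i, ∑ j, TΓ i j = γ) ∧
      (∀ j, ∑ i, φ i * TΓ i j = ∑ i, ψ i * TΓ i j) := by
  classical
  have hγle : ∀ i k : X, γ ≤ ∑ j, min (T i j) (T k j) := by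
    intro i k
    rw [hγ]
    exact Finset.inf'_le _ (Finset.mem_univ (i, k))
  have hγ0 : 0 ≤ γ := by
    rw [hγ]
    apply Finset.le_inf'
    intro b _
    exact Finset.sum_nonneg fun j _ => le_min (hT0 b.1 j) (hT0 b.2 j)
  have hγ1 : γ ≤ 1 := by
    obtain ⟨x⟩ := (inferInstance : Nonempty X)
    have h := hγle x x
    simp only [min_self, hT1 x] at h
    exact h
  by_cases heq : ∀ x, φ x = ψ x
  · refine ⟨fun i j => γ * T i j, fun i j => (1 - γ) * T i j, ?_, ?_, ?_, ?_, ?_⟩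
    · intro i j; exact mul_nonneg hγ0 (hT0 i j)
    · intro i j; exact mul_nonneg (by linarith) (hT0 i j)
    · intro i j; ring
    · intro i; rw [← Finset.mul_sum, hT1, mul_one]
    · intro j; exact Finset.sum_congr rfl fun i _ => by rw [heq i]
  rcases eq_or_lt_of_le hγ0 with hγz | hγpos
  · refine ⟨fun _ _ => 0, T, ?_, ?_, ?_, ?_, ?_⟩
    · intro i j; exact le_refl 0
    · intro i j; exact hT0 i j
    · intro i j; ring
    · intro i; simp [← hγz]
    · intro j; simp
  -- main case : γ > 0 and φ ≠ ψ
  set d : X → ℝ := fun i => φ i - ψ i with hd_def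
  set a : ℝ := ∑ i, max (d i) 0 with ha_def
  have hsum_d : ∑ i, d i = 0 := by
    simp only [hd_def, Finset.sum_sub_distrib, hφ1, hψ1, sub_self]
  have hmax : ∀ i, max (d i) 0 - max (-d i) 0 = d i := by
    intro i; rcases le_total (d i) 0 with h | h
    · rw [max_eq_right h, max_eq_left (by linarith)]; ring
    · rw [max_eq_left h, max_eq_right (by linarith)]; ring
  have hkey : ∑ i, max (d i) 0 = ∑ i, max (-d i) 0 := by
    have h2 : ∑ i, (max (d i) 0 - max (-d i) 0) = 0 := by
      rw [Finset.sum_congr rfl fun i _ => hmax i]; exact hsum_d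
    rw [Finset.sum_sub_distrib] at h2; linarith
  have ha0 : 0 ≤ a := Finset.sum_nonneg fun i _ => le_max_right _ _
  have ha_pos : 0 < a := by
    rcases ha0.lt_or_eq with h | h
    · exact h
    · exfalso; apply heq
      intro x
      have h1 : ∀ i ∈ Finset.univ, max (d i) 0 = 0 :=
        (Finset.sum_eq_zero_iff_of_nonneg (fun i _ => le_max_right _ _)).1 h.symm
      have h2 : ∀ i ∈ Finset.univ, max (-d i) 0 = 0 :=
        (Finset.sum_eq_zero_iff_of_nonneg (fun i _ => le_max_right _ _)).1
          (by rw [← hkey]; exact h.symm)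
      have hx1 : d x ≤ 0 := max_eq_right_iff.mp (h1 x (Finset.mem_univ x))
      have hx2 : -d x ≤ 0 := max_eq_right_iff.mp (h2 x (Finset.mem_univ x))
      have : d x = 0 := le_antisymm hx1 (by linarith)
      have hd' : φ x - ψ x = 0 := by simpa [hd_def] using this
      linarith
  set p : X → ℝ := fun i => max (d i) 0 / a with hp_def
  set q : X → ℝ := fun i => max (-d i) 0 / a with hq_def
  have hp0 : ∀ i, 0 ≤ p i := fun i => div_nonneg (le_max_right _ _) ha0
  have hq0 : ∀ i, 0 ≤ q i := fun i => div_nonneg (le_max_right _ _) ha0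
  have hp1 : ∑ i, p i = 1 := by
    simp only [hp_def]
    rw [← Finset.sum_div, ← ha_def, div_self ha_pos.ne']
  have hq1 : ∑ i, q i = 1 := by
    simp only [hq_def]
    rw [← Finset.sum_div, ← hkey, ← ha_def, div_self ha_pos.ne']
  have hdpq : ∀ i, d i = a * (p i - q i) := by
    intro i
    have e1 : a * p i = max (d i) 0 := by
      simp only [hp_def]; field_simp
    have e2 : a * q i = max (-d i) 0 := by
      simp only [hq_def]; field_simp
    rw [mul_sub, e1, e2, hmax i]
  have hdisj : ∀ i, 0 < p i → q i = 0 := by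
    intro i hpi
    have hdi : 0 < d i := by
      by_contra h
      push_neg at h
      have hz : p i = 0 := by
        simp only [hp_def]; rw [max_eq_right h]; simp
      linarith
    simp only [hq_def]
    rw [max_eq_right (by linarith : -d i ≤ 0)]; simp
  set M : X → X → X → ℝ := fun i k j => min (T i j) (T k j) with hM_def
  set S : X → X → ℝ := fun i k => ∑ j, M i k j with hS_def
  have hSeq : ∀ i k, S i k = ∑ j, M i k j := fun i k => by simp only [hS_def]
  have hSγ : ∀ i k, γ ≤ S i k := by
    intro i k
    rw [hSeq]; simp only [hM_def]
    exact hγle i k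
  have hSpos : ∀ i k, 0 < S i k := fun i k => lt_of_lt_of_le hγpos (hSγ i k)
  have hM0 : ∀ i k j, 0 ≤ M i k j := by
    intro i k j; simp only [hM_def]; exact le_min (hT0 i j) (hT0 k j)
  have hMsym : ∀ i k j, M i k j = M k i j := by
    intro i k j; simp only [hM_def]; exact min_comm _ _
  have hSsym : ∀ i k, S i k = S k i := by
    intro i k; rw [hSeq, hSeq]
    exact Finset.sum_congr rfl fun j _ => hMsym i k j
  have hMT : ∀ i k j, M i k j ≤ T i j := by
    intro i k j; simp only [hM_def]; exact min_le_left _ _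
  have hcore0 : ∀ i k j, 0 ≤ M i k j / S i k :=
    fun i k j => div_nonneg (hM0 i k j) (hSpos i k).le
  have hcore : ∀ i k j, γ * (M i k j / S i k) ≤ T i j := by
    intro i k j
    calc γ * (M i k j / S i k) ≤ S i k * (M i k j / S i k) :=
          mul_le_mul_of_nonneg_right (hSγ i k) (hcore0 i k j)
      _ = M i k j := by
          rw [mul_comm, div_mul_cancel₀ _ (hSpos i k).ne']
      _ ≤ T i j := hMT i k j
  set TΓ : X → X → ℝ := fun i j =>
    if 0 < p i then γ * ∑ k, q k * (M i k j / S i k)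
    else if 0 < q i then γ * ∑ k, p k * (M i k j / S i k)
    else γ * T i j with hTΓ_def
  have hTΓ0 : ∀ i j, 0 ≤ TΓ i j := by
    intro i j
    simp only [hTΓ_def]
    split_ifs with h1 h2
    · exact mul_nonneg hγpos.le
        (Finset.sum_nonneg fun k _ => mul_nonneg (hq0 k) (hcore0 i k j))
    · exact mul_nonneg hγpos.le
        (Finset.sum_nonneg fun k _ => mul_nonneg (hp0 k) (hcore0 i k j))
    · exact mul_nonneg hγpos.le (hT0 i j)
  have hTΓle : ∀ i j, TΓ i j ≤ T i j := by
    intro i j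
    simp only [hTΓ_def]
    split_ifs with h1 h2
    · calc γ * ∑ k, q k * (M i k j / S i k)
          = ∑ k, q k * (γ * (M i k j / S i k)) := by
            rw [Finset.mul_sum]; exact Finset.sum_congr rfl fun k _ => by ring
        _ ≤ ∑ k, q k * T i j :=
            Finset.sum_le_sum fun k _ =>
              mul_le_mul_of_nonneg_left (hcore i k j) (hq0 k)
        _ = T i j := by rw [← Finset.sum_mul, hq1, one_mul]
    · calc γ * ∑ k, p k * (M i k j / S i k)
          = ∑ k, p k * (γ * (M i k j / S i k)) := by
            rw [Finset.mul_sum]; exact Finset.sum_congr rfl fun k _ => by ring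
        _ ≤ ∑ k, p k * T i j :=
            Finset.sum_le_sum fun k _ =>
              mul_le_mul_of_nonneg_left (hcore i k j) (hp0 k)
        _ = T i j := by rw [← Finset.sum_mul, hp1, one_mul]
    · nlinarith [hT0 i j]
  have hgenrow : ∀ (i : X) (w : X → ℝ), (∑ k, w k = 1) →
      ∑ j, γ * ∑ k, w k * (M i k j / S i k) = γ := by
    intro i w hw
    rw [← Finset.mul_sum, Finset.sum_comm]
    have hterm : ∀ k, ∑ j, w k * (M i k j / S i k) = w k := by
      intro k
      rw [← Finset.mul_sum, ← Finset.sum_div, ← hSeq i k,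
        div_self (hSpos i k).ne', mul_one]
    rw [Finset.sum_congr rfl fun k _ => hterm k, hw, mul_one]
  have hrow : ∀ i, ∑ j, TΓ i j = γ := by
    intro i
    by_cases h1 : 0 < p i
    · simp only [hTΓ_def, if_pos h1]
      exact hgenrow i q hq1
    · by_cases h2 : 0 < q i
      · simp only [hTΓ_def, if_neg h1, if_pos h2]
        exact hgenrow i p hp1
      · simp only [hTΓ_def, if_neg h1, if_neg h2]
        rw [← Finset.mul_sum, hT1, mul_one]
  have hPcol : ∀ j, ∑ i, p i * TΓ i j
      = γ * ∑ i, ∑ k, p i * (q k * (M i k j / S i k)) := by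
    intro j
    rw [Finset.mul_sum]
    refine Finset.sum_congr rfl fun i _ => ?_
    by_cases hpi : 0 < p i
    · simp only [hTΓ_def, if_pos hpi]
      simp only [Finset.mul_sum]
      exact Finset.sum_congr rfl fun k _ => by ring
    · have hpz : p i = 0 := le_antisymm (not_lt.1 hpi) (hp0 i)
      simp [hpz]
  have hQcol : ∀ j, ∑ i, q i * TΓ i j
      = γ * ∑ i, ∑ k, q i * (p k * (M i k j / S i k)) := by
    intro j
    rw [Finset.mul_sum]
    refine Finset.sum_congr rfl fun i _ => ?_
    by_cases hqi : 0 < q i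
    · have hpi : ¬ 0 < p i := by
        intro hp
        have := hdisj i hp
        linarith
      simp only [hTΓ_def, if_neg hpi, if_pos hqi]
      simp only [Finset.mul_sum]
      exact Finset.sum_congr rfl fun k _ => by ring
    · have hqz : q i = 0 := le_antisymm (not_lt.1 hqi) (hq0 i)
      simp [hqz]
  have hsym : ∀ j, (∑ i, ∑ k, p i * (q k * (M i k j / S i k)))
      = ∑ i, ∑ k, q i * (p k * (M i k j / S i k)) := by
    intro j
    rw [Finset.sum_comm]
    refine Finset.sum_congr rfl fun i _ => Finset.sum_congr rfl fun k _ => ?_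
    rw [hMsym k i j, hSsym k i]
    ring
  have hcol : ∀ j, ∑ i, φ i * TΓ i j = ∑ i, ψ i * TΓ i j := by
    intro j
    have h2 : ∑ i, p i * TΓ i j = ∑ i, q i * TΓ i j := by
      rw [hPcol j, hQcol j, hsym j]
    have h1 : ∑ i, φ i * TΓ i j - ∑ i, ψ i * TΓ i j
        = a * (∑ i, p i * TΓ i j - ∑ i, q i * TΓ i j) := by
      rw [← Finset.sum_sub_distrib, ← Finset.sum_sub_distrib, Finset.mul_sum]
      refine Finset.sum_congr rfl fun i _ => ?_
      have hdi : φ i - ψ i = a * (p i - q i) := by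
        have h := hdpq i
        simpa [hd_def] using h
      calc φ i * TΓ i j - ψ i * TΓ i j = (φ i - ψ i) * TΓ i j := by ring
        _ = (a * (p i - q i)) * TΓ i j := by rw [hdi]
        _ = a * (p i * TΓ i j - q i * TΓ i j) := by ring
    rw [h2] at h1
    simp only [sub_self, mul_zero] at h1
    linarith
  exact ⟨TΓ, fun i j => T i j - TΓ i j, hTΓ0,
    fun i j => sub_nonneg.mpr (hTΓle i j),
    fun i j => by ring,
    hrow, hcol⟩
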